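/- Assume b−1 ∈ A and let s be a complex number with σ := Re s > log N / log b. Then there exists a constant K < ∞ such that for all x ∈ [0,1): Σ_{l=0}^∞ Σ over those (a_1,…,a_l) ∈ A^l with a_1/b + ⋯ + a_l/b^l ≥ x of b^{−lσ} ≤ K (1−x)^σ. In other words, the total variation measure |μ_s| = μ_σ of the discrete complex measure μ_s satisfies the Hölder condition |μ_s|([x,1)) ≤ K(1−x)^σ at 1. -/

import Mathlib

open Finset
open scoped ENNReal

noncomputable section

/-- The rational point a₁/b + ⋯ + a_l/b^l attached to a digit tuple. -/
def digitVal (b l : ℕ) (a : Fin l → ℕ) : ℝ :=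
  ∑ i : Fin l, (a i : ℝ) / (b : ℝ) ^ ((i : ℕ) + 1)

/-- The finset of digit tuples of length l with entries in A. -/
def tuples (A : Finset ℕ) (l : ℕ) : Finset (Fin l → ℕ) :=
  Fintype.piFinset fun _ => A

lemma mem_tuples {A : Finset ℕ} {l : ℕ} {a : Fin l → ℕ} :
    a ∈ tuples A l ↔ ∀ i, a i ∈ A := Fintype.mem_piFinset

lemma geom_aux {b : ℕ} (hb : 2 ≤ b) (l : ℕ) :
    ∑ i ∈ Finset.range l, ((b:ℝ) - 1) / (b:ℝ) ^ (i+1) = 1 - (1/(b:ℝ))^l := by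
  have hb0 : (b:ℝ) ≠ 0 := by positivity
  induction l with
  | zero => simp
  | succ n ih =>
    rw [Finset.sum_range_succ, ih]
    simp only [one_div, inv_pow]
    field_simp
    ring

lemma digitVal_le {b l : ℕ} (hb : 2 ≤ b) {a : Fin l → ℕ} (ha : ∀ i, a i < b) :
    digitVal b l a ≤ 1 - (1/(b:ℝ))^l := by
  rw [← geom_aux hb l, ← Fin.sum_univ_eq_sum_range (fun i => ((b:ℝ)-1)/(b:ℝ)^(i+1)) l]
  unfold digitVal
  apply Finset.sum_le_sum
  intro i _
  have h1 : (a i : ℝ) ≤ (b:ℝ) - 1 := by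
    have := ha i
    have : (a i : ℝ) + 1 ≤ (b:ℝ) := by exact_mod_cast this
    linarith
  gcongr

lemma digitVal_nonneg {b l : ℕ} (a : Fin l → ℕ) : 0 ≤ digitVal b l a := by
  unfold digitVal
  positivity

lemma digitVal_add {b m j : ℕ} (hb : 2 ≤ b) (a : Fin (m+j) → ℕ) :
    digitVal b (m+j) a = digitVal b m (fun i => a (Fin.castAdd j i))
      + (1/(b:ℝ))^m * digitVal b j (fun i => a (Fin.natAdd m i)) := by
  have hb0 : (b:ℝ) ≠ 0 := by positivity
  unfold digitVal
  rw [Fin.sum_univ_add, Finset.mul_sum]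
  congr 1
  apply Finset.sum_congr rfl
  intro i _
  have hval : ((Fin.natAdd m i : Fin (m+j)) : ℕ) = m + (i:ℕ) := rfl
  rw [hval, show m + (i:ℕ) + 1 = m + ((i:ℕ)+1) from by omega, pow_add, one_div, inv_pow]
  field_simp

def pInt (b m : ℕ) (c : Fin m → ℕ) : ℕ := ∑ i : Fin m, c (Fin.rev i) * b ^ (i : ℕ)

lemma pInt_lt {b m : ℕ} {c : Fin m → ℕ} (hc : ∀ i, c i < b) :
    pInt b m c < b ^ m := by
  have h : pInt b m c
      = ((finFunctionFinEquiv (fun i => (⟨c (Fin.rev i), hc _⟩ : Fin b))) : ℕ) := by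
    rw [finFunctionFinEquiv_apply]
    rfl
  rw [h]
  exact (finFunctionFinEquiv _).isLt

lemma pInt_inj {b m : ℕ} {c c' : Fin m → ℕ} (hc : ∀ i, c i < b) (hc' : ∀ i, c' i < b)
    (h : pInt b m c = pInt b m c') : c = c' := by
  have h2 : finFunctionFinEquiv (fun i => (⟨c (Fin.rev i), hc _⟩ : Fin b))
      = finFunctionFinEquiv (fun i => (⟨c' (Fin.rev i), hc' _⟩ : Fin b)) := by
    apply Fin.val_injective
    rw [finFunctionFinEquiv_apply, finFunctionFinEquiv_apply]
    exact h
  have h3 := finFunctionFinEquiv.injective h2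
  funext i
  have h4 := congrFun h3 (Fin.rev i)
  simpa [Fin.rev_rev] using h4

lemma pInt_real {b m : ℕ} (hb : 2 ≤ b) (c : Fin m → ℕ) :
    (pInt b m c : ℝ) = (b:ℝ)^m * digitVal b m c := by
  have hb0 : (b:ℝ) ≠ 0 := by positivity
  unfold pInt digitVal
  push_cast
  rw [Finset.mul_sum]
  rw [← Equiv.sum_comp (Fin.revPerm (n := m))
    (fun i : Fin m => (b:ℝ)^m * ((c i : ℝ) / (b:ℝ)^((i:ℕ)+1)))]
  apply Finset.sum_congr rfl
  intro i _
  simp only [Fin.revPerm_apply]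
  have hi : (Fin.rev i : ℕ) + 1 = m - (i:ℕ) := by
    rw [Fin.val_rev]
    omega
  rw [hi]
  have hsplit : (b:ℝ)^m = (b:ℝ)^(i:ℕ) * (b:ℝ)^(m - (i:ℕ)) := by
    rw [← pow_add]
    congr 1
    omega
  rw [hsplit]
  field_simp

lemma filter_empty_of_lt {b l : ℕ} (hb : 2 ≤ b) {A : Finset ℕ} (hAb : A ⊆ Finset.range b)
    {x : ℝ} (h : 1 - x < (1/(b:ℝ))^l) :
    (tuples A l).filter (fun a => x ≤ digitVal b l a) = ∅ := by
  rw [Finset.filter_eq_empty_iff]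
  intro a ha
  rw [not_le]
  have h1 := digitVal_le hb (fun i => Finset.mem_range.mp (hAb (mem_tuples.mp ha i)))
  linarith

lemma count_bound {b : ℕ} (hb : 2 ≤ b) {A : Finset ℕ} (hAb : A ⊆ Finset.range b)
    {x : ℝ} {m : ℕ} (Hm : (b:ℝ)^m * (1-x) ≤ b) (j : ℕ) :
    ((tuples A (m+j)).filter (fun a => x ≤ digitVal b (m+j) a)).card
      ≤ (b+2) * A.card ^ j := by
  have hb0 : (0:ℝ) < b := by positivity
  have hbm : (0:ℝ) < (b:ℝ)^m := by positivity
  have hdig : ∀ {l : ℕ} {a : Fin l → ℕ}, a ∈ tuples A l → ∀ i, a i < b :=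
    fun ha i => Finset.mem_range.mp (hAb (mem_tuples.mp ha i))
  set c : ℕ := ⌈(b:ℝ)^m * x - 1⌉₊ with hc
  set S : Finset ℕ := Finset.Ico c (b^m) with hS
  have hScard : S.card ≤ b + 2 := by
    rw [hS, Nat.card_Ico]
    have h1 : ((b:ℝ)^m * x - 1) ≤ (c:ℝ) := Nat.le_ceil _
    have h2 : (b:ℝ)^m ≤ ((b:ℝ)+2) + c := by nlinarith
    have h3 : b^m ≤ b + 2 + c := by exact_mod_cast h2
    omega
  have hT : (S ×ˢ tuples A j).card ≤ (b+2) * A.card ^ j := by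
    rw [Finset.card_product]
    have h4 : (tuples A j).card = A.card ^ j := by
      rw [tuples, Fintype.card_piFinset]
      simp
    rw [h4]
    exact Nat.mul_le_mul_right _ hScard
  refine le_trans (Finset.card_le_card_of_injOn
    (fun a => (pInt b m (fun i => a (Fin.castAdd j i)), fun i => a (Fin.natAdd m i)))
    ?_ ?_) hT
  · intro a ha
    rw [Finset.mem_coe, Finset.mem_filter] at ha
    obtain ⟨haA, hax⟩ := ha
    rw [Finset.mem_coe, Finset.mem_product]
    refine ⟨?_, ?_⟩
    · rw [hS, Finset.mem_Ico]
      constructor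
      · rw [hc, Nat.ceil_le]
        rw [digitVal_add hb a] at hax
        have hpr := pInt_real hb (fun i => a (Fin.castAdd j i))
        have hsufle : digitVal b j (fun i => a (Fin.natAdd m i)) ≤ 1 := by
          have h5 := digitVal_le hb (a := fun i => a (Fin.natAdd m i))
            (fun i => hdig haA _)
          have h6 : (0:ℝ) ≤ (1/(b:ℝ))^j := by positivity
          linarith
        have h7 : (0:ℝ) < (1/(b:ℝ))^m := by positivity
        have h8 : digitVal b m (fun i => a (Fin.castAdd j i))
            = (pInt b m (fun i => a (Fin.castAdd j i)) : ℝ) / (b:ℝ)^m := by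
          rw [hpr]
          field_simp
        have h9 : (1/(b:ℝ))^m * digitVal b j (fun i => a (Fin.natAdd m i))
            ≤ (1/(b:ℝ))^m := by
          nlinarith [digitVal_nonneg (b := b) (fun i => a (Fin.natAdd m i))]
        have h10 : x ≤ (pInt b m (fun i => a (Fin.castAdd j i)) : ℝ) / (b:ℝ)^m
            + (1/(b:ℝ))^m := by
          rw [h8] at hax
          linarith
        have h11 : (b:ℝ)^m * ((pInt b m (fun i => a (Fin.castAdd j i)) : ℝ) / (b:ℝ)^m
            + (1/(b:ℝ))^m) = (pInt b m (fun i => a (Fin.castAdd j i)) : ℝ) + 1 := by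
          simp only [one_div, inv_pow]
          field_simp
        nlinarith [mul_le_mul_of_nonneg_left h10 hbm.le]
      · exact pInt_lt (fun i => hdig haA _)
    · exact mem_tuples.mpr (fun i => mem_tuples.mp haA _)
  · intro a ha a' ha' heq
    have ha1 : a ∈ (tuples A (m+j)).filter (fun a => x ≤ digitVal b (m+j) a) := ha
    have ha1' : a' ∈ (tuples A (m+j)).filter (fun a => x ≤ digitVal b (m+j) a) := ha'
    rw [Finset.mem_filter] at ha1 ha1'
    have h1 := congrArg Prod.fst heq
    have h2 := congrArg Prod.snd heq
    simp only at h1 h2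
    have hpre := pInt_inj (fun i => hdig ha1.1 _) (fun i => hdig ha1'.1 _) h1
    funext i
    refine Fin.addCases (motive := fun i => a i = a' i) ?_ ?_ i
    · intro k
      exact congrFun hpre k
    · intro k
      exact congrFun h2 k

/-- Assume b−1 ∈ A, σ = Re s > log N / log b.  There exists K < ∞ such
that for all x ∈ [0,1), the total variation mass |μ_s|([x,1)) — i.e. the sum of
b^{−lσ} over all tuples with value ≥ x — is at most K(1−x)^σ. -/
theorem mu_s_holder
    (b : ℕ) (hb : 2 ≤ b) (A : Finset ℕ) (hA : A.Nonempty) (hAb : A ⊆ Finset.range b)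
    (hbA : b - 1 ∈ A)
    (s : ℂ) (hs : Real.log A.card / Real.log b < s.re) :
    ∃ K : ℝ, ∀ x ∈ Set.Ico (0:ℝ) 1,
      ∑' l : ℕ, ∑ a ∈ (tuples A l).filter (fun a => x ≤ digitVal b l a),
          ENNReal.ofReal ((b : ℝ) ^ (-(l : ℝ) * s.re))
        ≤ ENNReal.ofReal (K * (1 - x) ^ s.re) := by
  have hb1 : (1:ℝ) < (b:ℝ) := by exact_mod_cast (by omega : 1 < b)
  have hb0 : (0:ℝ) < b := by linarith
  set σ := s.re with hσdef
  have hN1 : (1:ℝ) ≤ A.card := by exact_mod_cast hA.card_pos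
  have hlogb : 0 < Real.log b := Real.log_pos hb1
  have hσ : 0 < σ := lt_of_le_of_lt (div_nonneg (Real.log_nonneg hN1) hlogb.le) hs
  set q : ℝ := (A.card : ℝ) * (b:ℝ) ^ (-σ) with hqdef
  have hbσ : (0:ℝ) < (b:ℝ)^(-σ) := Real.rpow_pos_of_pos hb0 _
  have hq0 : 0 < q := by positivity
  have hq1 : q < 1 := by
    have hNb : (A.card:ℝ) < (b:ℝ)^σ := by
      rw [Real.lt_rpow_iff_log_lt (by linarith) hb0]
      exact (div_lt_iff₀ hlogb).mp hs
    rw [hqdef, Real.rpow_neg hb0.le, ← div_eq_mul_inv, div_lt_one (Real.rpow_pos_of_pos hb0 _)]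
    exact hNb
  refine ⟨((b:ℝ)+2) * (1-q)⁻¹, ?_⟩
  intro x hx
  obtain ⟨hx0, hx1⟩ := hx
  have hex : ∃ n : ℕ, (1/(b:ℝ))^n ≤ 1 - x := by
    obtain ⟨n, hn⟩ := exists_pow_lt_of_lt_one (by linarith : (0:ℝ) < 1-x)
      (by rw [div_lt_one hb0]; exact hb1)
    exact ⟨n, hn.le⟩
  set m := Nat.find hex with hmdef
  have hm : (1/(b:ℝ))^m ≤ 1 - x := Nat.find_spec hex
  have hmmin : ∀ l, l < m → 1 - x < (1/(b:ℝ))^l := fun l hl => not_le.mp (Nat.find_min hex hl)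
  have Hm : (b:ℝ)^m * (1-x) ≤ b := by
    rcases Nat.eq_zero_or_pos m with h0 | h0
    · rw [h0]
      simp
      linarith
    · obtain ⟨k, hk⟩ : ∃ k, m = k + 1 := ⟨m - 1, by omega⟩
      have h1 := hmmin (m-1) (by omega)
      have h2 : (b:ℝ)^m * (1/(b:ℝ))^(m-1) = b := by
        rw [hk]
        simp only [Nat.add_sub_cancel]
        rw [pow_succ, one_div, inv_pow]
        field_simp
      calc (b:ℝ)^m * (1-x) ≤ (b:ℝ)^m * (1/(b:ℝ))^(m-1) :=
            mul_le_mul_of_nonneg_left h1.le (by positivity)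
        _ = b := h2
  set F : ℕ → ℝ≥0∞ := fun l => ∑ a ∈ (tuples A l).filter (fun a => x ≤ digitVal b l a),
      ENNReal.ofReal ((b : ℝ) ^ (-(l : ℝ) * σ)) with hF
  have hinner : ∀ l, F l = (((tuples A l).filter (fun a => x ≤ digitVal b l a)).card : ℝ≥0∞)
      * ENNReal.ofReal ((b : ℝ) ^ (-(l : ℝ) * σ)) := by
    intro l
    rw [hF]
    simp only
    rw [Finset.sum_const, nsmul_eq_mul]
  have hFzero : ∀ l, l < m → F l = 0 := by
    intro l hl
    rw [hinner l, filter_empty_of_lt hb hAb (hmmin l hl)]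
    simp
  have hshift : ∑' l, F l = ∑' j : ℕ, F (m + j) := by
    symm
    apply Function.Injective.tsum_eq (g := fun j : ℕ => m + j)
    · intro a a' h
      have h' : m + a = m + a' := h
      omega
    · intro l hl
      rcases lt_or_ge l m with h | h
      · exact absurd (hFzero l h) hl
      · exact ⟨l - m, show m + (l - m) = l by omega⟩
  have hmono : ∀ j : ℕ, F (m + j) ≤
      ENNReal.ofReal (((b:ℝ)+2) * (b:ℝ)^(-(m:ℝ)*σ)) * (ENNReal.ofReal q)^j := by
    intro j
    rw [hinner (m+j)]
    have hcard := count_bound hb hAb Hm j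
    have hpow : (b:ℝ) ^ (-(((m+j):ℕ):ℝ) * σ) = (b:ℝ)^(-(m:ℝ)*σ) * ((b:ℝ)^(-σ))^j := by
      rw [← Real.rpow_natCast ((b:ℝ)^(-σ)) j, ← Real.rpow_mul hb0.le, ← Real.rpow_add hb0]
      congr 1
      push_cast
      ring
    calc ((((tuples A (m+j)).filter (fun a => x ≤ digitVal b (m+j) a)).card : ℝ≥0∞))
          * ENNReal.ofReal ((b : ℝ) ^ (-(((m+j):ℕ):ℝ) * σ))
        ≤ (((b+2) * A.card ^ j : ℕ) : ℝ≥0∞)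
          * ENNReal.ofReal ((b : ℝ) ^ (-(((m+j):ℕ):ℝ) * σ)) := by
          gcongr
      _ = ENNReal.ofReal (((b:ℝ)+2) * (b:ℝ)^(-(m:ℝ)*σ)) * (ENNReal.ofReal q)^j := by
          rw [hpow, ← ENNReal.ofReal_natCast ((b+2) * A.card ^ j),
            ← ENNReal.ofReal_pow hq0.le,
            ← ENNReal.ofReal_mul (by positivity),
            ← ENNReal.ofReal_mul (by positivity)]
          congr 1
          rw [hqdef]
          push_cast
          ring
  have hple : (b:ℝ)^(-(m:ℝ)*σ) ≤ (1-x)^σ := by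
    have hbm' : (b:ℝ)^(-(m:ℝ)) = (1/(b:ℝ))^m := by
      rw [Real.rpow_neg hb0.le, Real.rpow_natCast, one_div, inv_pow]
    have h1 : (b:ℝ)^(-(m:ℝ)*σ) = ((b:ℝ)^(-(m:ℝ)))^σ := Real.rpow_mul hb0.le _ _
    rw [h1, hbm']
    exact Real.rpow_le_rpow (by positivity) hm hσ.le
  have h1q : (0:ℝ) < 1 - q := by linarith
  calc ∑' l, F l = ∑' j : ℕ, F (m + j) := hshift
    _ ≤ ∑' j : ℕ, ENNReal.ofReal (((b:ℝ)+2) * (b:ℝ)^(-(m:ℝ)*σ)) * (ENNReal.ofReal q)^j :=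
        ENNReal.tsum_le_tsum hmono
    _ = ENNReal.ofReal (((b:ℝ)+2) * (b:ℝ)^(-(m:ℝ)*σ)) * (1 - ENNReal.ofReal q)⁻¹ := by
        rw [ENNReal.tsum_mul_left, ENNReal.tsum_geometric]
    _ = ENNReal.ofReal ((((b:ℝ)+2) * (b:ℝ)^(-(m:ℝ)*σ)) * (1-q)⁻¹) := by
        rw [← ENNReal.ofReal_one, ← ENNReal.ofReal_sub 1 hq0.le,
          ← ENNReal.ofReal_inv_of_pos h1q,
          ← ENNReal.ofReal_mul (by positivity)]
    _ ≤ ENNReal.ofReal ((((b:ℝ)+2) * (1-q)⁻¹) * (1 - x) ^ σ) := by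
        apply ENNReal.ofReal_le_ofReal
        have h2 : (0:ℝ) ≤ ((b:ℝ)+2) * (1-q)⁻¹ := by positivity
        calc (((b:ℝ)+2) * (b:ℝ)^(-(m:ℝ)*σ)) * (1-q)⁻¹
            = (((b:ℝ)+2) * (1-q)⁻¹) * (b:ℝ)^(-(m:ℝ)*σ) := by ring
          _ ≤ (((b:ℝ)+2) * (1-q)⁻¹) * (1 - x) ^ σ := mul_le_mul_of_nonneg_left hple h2
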